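/- Lemma 2.1 (distance of the caloric extension to the target): let N ⊂ ℝ^l be a compact set. For every δ > 0 there exists K = K(δ, N) > 0 such that for every 0 < R ≤ ∞ and every measurable u₀ : ℝⁿ → N with [u₀]_{BMO_R(ℝⁿ)} < ∞, the caloric extension ũ₀ satisfies dist(ũ₀(x,t), N) ≤ K [u₀]_{BMO_R(ℝⁿ)} + δ for all x ∈ ℝⁿ and all 0 < t ≤ R²/K². In particular, if u₀ ∈ BMO(ℝⁿ) then dist(ũ₀(x,t), N) ≤ K [u₀]_{BMO(ℝⁿ)} + δ for all (x,t) ∈ ℝⁿ × (0,∞). -/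

import Mathlib

open MeasureTheory Metric Set
open scoped ENNReal

noncomputable section

abbrev Rn (n : ℕ) : Type := EuclideanSpace ℝ (Fin n)

/-- The heat kernel `G(x,t) = (4πt)^{-n/2} e^{-|x|²/(4t)}` on `ℝⁿ`. -/
def heatKernel (n : ℕ) (x : Rn n) (t : ℝ) : ℝ :=
  (4 * Real.pi * t) ^ (-(n : ℝ) / 2) * Real.exp (-‖x‖ ^ 2 / (4 * t))

/-- Caloric extension `ũ₀(x,t) = ∫ G(x-y,t) u₀(y) dy` (componentwise). -/
def caloricExt {n : ℕ} {F : Type*} [NormedAddCommGroup F] [NormedSpace ℝ F]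
    (u₀ : Rn n → F) (x : Rn n) (t : ℝ) : F :=
  ∫ y, heatKernel n (x - y) t • u₀ y

/-- Average of `f` over the ball `B_r(x)`. -/
def ballAvg {n : ℕ} {F : Type*} [NormedAddCommGroup F] [NormedSpace ℝ F]
    (f : Rn n → F) (x : Rn n) (r : ℝ) : F :=
  ⨍ y in ball x r, f y

/-- The set of numbers `r^{-n} ∫_{B_r(x)} |f - f_{x,r}|`, for `x ∈ ℝⁿ` and `0 < r ≤ R`. -/
def bmoSet {n : ℕ} {F : Type*} [NormedAddCommGroup F] [NormedSpace ℝ F]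
    (f : Rn n → F) (R : ℝ≥0∞) : Set ℝ :=
  {a | ∃ x r, 0 < r ∧ ENNReal.ofReal r ≤ R ∧
    a = (r ^ n)⁻¹ * ∫ y in ball x r, ‖f y - ballAvg f x r‖}

/-- The BMO_R seminorm `[f]_{BMO_R}`. -/
def bmoSeminorm {n : ℕ} {F : Type*} [NormedAddCommGroup F] [NormedSpace ℝ F]
    (f : Rn n → F) (R : ℝ≥0∞) : ℝ :=
  sSup (bmoSet f R)

/-- Spatial partial derivative in direction `e_i` of a time-dependent map. -/
def spd {n : ℕ} {F : Type*} [NormedAddCommGroup F] [NormedSpace ℝ F]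
    (u : Rn n → ℝ → F) (x : Rn n) (t : ℝ) (i : Fin n) : F :=
  fderiv ℝ (fun z => u z t) x (EuclideanSpace.single i 1)

/-- Carleson set of the gradient: numbers `r^{-n} ∫_{P_r(x,r²)} |∇u|²` for `0 < r ≤ R`. -/
def gradCarlesonSet {n : ℕ} {F : Type*} [NormedAddCommGroup F] [NormedSpace ℝ F]
    (u : Rn n → ℝ → F) (R : ℝ≥0∞) : Set ℝ :=
  {a | ∃ x r, 0 < r ∧ ENNReal.ofReal r ≤ R ∧
    a = (r ^ n)⁻¹ * ∫ t in Ioc (0:ℝ) (r ^ 2), ∫ y in ball x r,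
      ‖fderiv ℝ (fun z => u z t) y‖ ^ 2}

/-- Duhamel operator `𝕊f(x,t) = ∫_0^t ∫ G(x-y,t-s) f(y,s) dy ds`. -/
def duhamel {n : ℕ} {F : Type*} [NormedAddCommGroup F] [NormedSpace ℝ F]
    (f : Rn n → ℝ → F) (x : Rn n) (t : ℝ) : F :=
  ∫ s in Ioc (0:ℝ) t, ∫ y, heatKernel n (x - y) (t - s) • f y s

/-! Constituent sets for the norms of the spaces `X_T`, `Y_T`, `Z_T` (with `T ∈ (0,∞]`). -/

def xSet1 {n : ℕ} {F : Type*} [NormedAddCommGroup F] [NormedSpace ℝ F]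
    (f : Rn n → ℝ → F) (T : ℝ≥0∞) : Set ℝ :=
  {a | ∃ x t, 0 < t ∧ ENNReal.ofReal t ≤ T ∧ a = ‖f x t‖}

def xSet2 {n : ℕ} {F : Type*} [NormedAddCommGroup F] [NormedSpace ℝ F]
    (f : Rn n → ℝ → F) (T : ℝ≥0∞) : Set ℝ :=
  {a | ∃ x t, 0 < t ∧ ENNReal.ofReal t ≤ T ∧
    a = Real.sqrt t * ‖fderiv ℝ (fun z => f z t) x‖}

def xSet3 {n : ℕ} {F : Type*} [NormedAddCommGroup F] [NormedSpace ℝ F]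
    (f : Rn n → ℝ → F) (T : ℝ≥0∞) : Set ℝ :=
  {a | ∃ x r, 0 < r ∧ ENNReal.ofReal (r ^ 2) ≤ T ∧
    a = (r ^ n)⁻¹ * ∫ t in Ioc (0:ℝ) (r ^ 2), ∫ y in ball x r,
      ‖fderiv ℝ (fun z => f z t) y‖ ^ 2}

/-- Membership in `X_T`. -/
def MemX {n : ℕ} {F : Type*} [NormedAddCommGroup F] [NormedSpace ℝ F]
    (f : Rn n → ℝ → F) (T : ℝ≥0∞) : Prop :=
  BddAbove (xSet1 f T) ∧ BddAbove (xSet2 f T) ∧ BddAbove (xSet3 f T)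

/-- `‖f‖_{X_T}`. -/
def xNorm {n : ℕ} {F : Type*} [NormedAddCommGroup F] [NormedSpace ℝ F]
    (f : Rn n → ℝ → F) (T : ℝ≥0∞) : ℝ :=
  sSup (xSet2 f T) + Real.sqrt (sSup (xSet3 f T))

/-- `|||f|||_{X_T}`. -/
def xNormFull {n : ℕ} {F : Type*} [NormedAddCommGroup F] [NormedSpace ℝ F]
    (f : Rn n → ℝ → F) (T : ℝ≥0∞) : ℝ :=
  sSup (xSet1 f T) + xNorm f T

def ySet1 {n : ℕ} {F : Type*} [NormedAddCommGroup F] [NormedSpace ℝ F]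
    (f : Rn n → ℝ → F) (T : ℝ≥0∞) : Set ℝ :=
  {a | ∃ x t, 0 < t ∧ ENNReal.ofReal t ≤ T ∧ a = t * ‖f x t‖}

def ySet2 {n : ℕ} {F : Type*} [NormedAddCommGroup F] [NormedSpace ℝ F]
    (f : Rn n → ℝ → F) (T : ℝ≥0∞) : Set ℝ :=
  {a | ∃ x r, 0 < r ∧ ENNReal.ofReal (r ^ 2) ≤ T ∧
    a = (r ^ n)⁻¹ * ∫ t in Ioc (0:ℝ) (r ^ 2), ∫ y in ball x r, ‖f y t‖}

/-- Membership in `Y_T`. -/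
def MemY {n : ℕ} {F : Type*} [NormedAddCommGroup F] [NormedSpace ℝ F]
    (f : Rn n → ℝ → F) (T : ℝ≥0∞) : Prop :=
  BddAbove (ySet1 f T) ∧ BddAbove (ySet2 f T)

/-- `‖f‖_{Y_T}`. -/
def yNorm {n : ℕ} {F : Type*} [NormedAddCommGroup F] [NormedSpace ℝ F]
    (f : Rn n → ℝ → F) (T : ℝ≥0∞) : ℝ :=
  sSup (ySet1 f T) + sSup (ySet2 f T)

def zSet1 {n : ℕ} {F : Type*} [NormedAddCommGroup F] [NormedSpace ℝ F]
    (f : Rn n → ℝ → F) (T : ℝ≥0∞) : Set ℝ :=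
  {a | ∃ x t, 0 < t ∧ ENNReal.ofReal t ≤ T ∧ a = Real.sqrt t * ‖f x t‖}

def zSet2 {n : ℕ} {F : Type*} [NormedAddCommGroup F] [NormedSpace ℝ F]
    (f : Rn n → ℝ → F) (T : ℝ≥0∞) : Set ℝ :=
  {a | ∃ x r, 0 < r ∧ ENNReal.ofReal (r ^ 2) ≤ T ∧
    a = (r ^ n)⁻¹ * ∫ t in Ioc (0:ℝ) (r ^ 2), ∫ y in ball x r, ‖f y t‖ ^ 2}

/-- Membership in `Z_T`. -/
def MemZ {n : ℕ} {F : Type*} [NormedAddCommGroup F] [NormedSpace ℝ F]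
    (f : Rn n → ℝ → F) (T : ℝ≥0∞) : Prop :=
  BddAbove (zSet1 f T) ∧ BddAbove (zSet2 f T)

/-- `‖f‖_{Z_T}`. -/
def zNorm {n : ℕ} {F : Type*} [NormedAddCommGroup F] [NormedSpace ℝ F]
    (f : Rn n → ℝ → F) (T : ℝ≥0∞) : ℝ :=
  sSup (zSet1 f T) + Real.sqrt (sSup (zSet2 f T))

end


lemma integrable_rexp_neg_mul_sq_norm (n : ℕ) {b : ℝ} (hb : 0 < b) :
    Integrable (fun v : Rn n => Real.exp (-b * ‖v‖^2)) := by
  have h := (GaussianFourier.integrable_cexp_neg_mul_sq_norm_add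
    (V := Rn n) (b := (b:ℂ)) (by simpa using hb) 0 (0 : Rn n)).norm
  refine h.congr (Filter.Eventually.of_forall fun v => ?_)
  simp [Complex.norm_exp, ← Complex.ofReal_pow]

lemma integral_rexp_neg_mul_sq_norm' (n : ℕ) {b : ℝ} (hb : 0 < b) :
    ∫ v : Rn n, Real.exp (-b * ‖v‖^2) = (Real.pi / b) ^ ((n : ℝ)/2) := by
  rw [GaussianFourier.integral_rexp_neg_mul_sq_norm hb]
  norm_num [finrank_euclideanSpace_fin]

lemma heatKernel_eq (n : ℕ) (z : Rn n) (t : ℝ) :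
    heatKernel n z t = (4 * Real.pi * t) ^ (-(n : ℝ) / 2) * Real.exp (-(4*t)⁻¹ * ‖z‖^2) := by
  rw [heatKernel]; ring_nf

lemma heatKernel_nonneg {n : ℕ} (z : Rn n) {t : ℝ} (ht : 0 < t) : 0 ≤ heatKernel n z t := by
  rw [heatKernel]; positivity

lemma heatKernel_le {n : ℕ} (z : Rn n) {t : ℝ} (ht : 0 < t) :
    heatKernel n z t ≤ (4 * Real.pi * t) ^ (-(n : ℝ) / 2) := by
  rw [heatKernel]
  have h1 : Real.exp (-‖z‖ ^ 2 / (4 * t)) ≤ 1 := by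
    rw [Real.exp_le_one_iff]
    have : (0:ℝ) ≤ ‖z‖^2 / (4*t) := by positivity
    linarith [neg_div (4*t) (‖z‖^2)]
  nlinarith [Real.rpow_natCast (4*Real.pi*t) 0, Real.rpow_pos_of_pos (show (0:ℝ) < 4*Real.pi*t by positivity) (-(n:ℝ)/2), Real.exp_pos (-‖z‖ ^ 2 / (4 * t))]

lemma heatKernel_integrable {n : ℕ} {t : ℝ} (ht : 0 < t) :
    Integrable (fun z : Rn n => heatKernel n z t) := by
  simp_rw [heatKernel_eq]
  exact (integrable_rexp_neg_mul_sq_norm n (by positivity : (0:ℝ) < (4*t)⁻¹)).const_mul _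

lemma heatKernel_integrable_sub {n : ℕ} {t : ℝ} (ht : 0 < t) (x : Rn n) :
    Integrable (fun y : Rn n => heatKernel n (x - y) t) :=
  (heatKernel_integrable ht).comp_sub_left x

lemma integral_heatKernel {n : ℕ} {t : ℝ} (ht : 0 < t) :
    ∫ z : Rn n, heatKernel n z t = 1 := by
  simp_rw [heatKernel_eq]
  rw [integral_const_mul, integral_rexp_neg_mul_sq_norm' n (by positivity : (0:ℝ) < (4*t)⁻¹)]
  have h4 : Real.pi / (4*t)⁻¹ = 4 * Real.pi * t := by field_simp
  rw [h4, ← Real.rpow_add (by positivity)]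
  rw [show -(n:ℝ)/2 + (n:ℝ)/2 = 0 by ring, Real.rpow_zero]

lemma integral_heatKernel_sub {n : ℕ} {t : ℝ} (ht : 0 < t) (x : Rn n) :
    ∫ y : Rn n, heatKernel n (x - y) t = 1 := by
  rw [integral_sub_left_eq_self (fun z : Rn n => heatKernel n z t) volume x]
  exact integral_heatKernel ht

set_option maxHeartbeats 2000000 in
/-- Lemma 2.1: distance of the caloric extension to the target set. -/
theorem statement5 (n l : ℕ) (hn : 1 ≤ n)
    (N : Set (Rn l)) (hN : IsCompact N) :
    ∀ δ : ℝ, 0 < δ → ∃ K : ℝ, 0 < K ∧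
      ∀ R : ℝ≥0∞, 0 < R →
        ∀ u₀ : Rn n → Rn l, Measurable u₀ → (∀ x, u₀ x ∈ N) →
          BddAbove (bmoSet u₀ R) →
          (∀ x : Rn n, ∀ t : ℝ, 0 < t → ENNReal.ofReal (K ^ 2 * t) ≤ R ^ 2 →
            Metric.infDist (caloricExt u₀ x t) N ≤ K * bmoSeminorm u₀ R + δ) ∧
          (R = ⊤ → ∀ x : Rn n, ∀ t : ℝ, 0 < t →
            Metric.infDist (caloricExt u₀ x t) N ≤ K * bmoSeminorm u₀ ⊤ + δ) := by
  intro δ hδ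
  obtain ⟨M₀, hM₀⟩ := hN.isBounded.subset_closedBall 0
  set M : ℝ := max M₀ 0 with hM
  have hMnn : (0:ℝ) ≤ M := le_max_right _ _
  have hNM : ∀ z ∈ N, ‖z‖ ≤ M := fun z hz =>
    le_trans (by simpa using hM₀ hz) (le_max_left _ _)
  have h2pos : (0:ℝ) < (2:ℝ) ^ ((n:ℝ)/2) := Real.rpow_pos_of_pos two_pos _
  set ε : ℝ := δ / (2*M*(2:ℝ)^((n:ℝ)/2) + 1) with hεdef
  have hεpos : 0 < ε := by
    apply div_pos hδ; nlinarith
  set c0 : ℝ := max 0 (-Real.log ε) with hc0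
  have hc0nn : 0 ≤ c0 := le_max_left _ _
  set K₀ : ℝ := Real.sqrt (8*c0) + 1 with hK₀def
  have hK₀1 : (1:ℝ) ≤ K₀ := by
    have := Real.sqrt_nonneg (8*c0); linarith
  have hK₀pos : (0:ℝ) < K₀ := lt_of_lt_of_le one_pos hK₀1
  have hexp : Real.exp (-K₀^2/8) ≤ ε := by
    have hs : 8*c0 ≤ K₀^2 := by
      have h1 := Real.sq_sqrt (by positivity : (0:ℝ) ≤ 8*c0)
      have h2 := Real.sqrt_nonneg (8*c0)
      nlinarith
    have h3 : -K₀^2/8 ≤ -c0 := by nlinarith [hs]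
    have h4 : -c0 ≤ Real.log ε := by
      have : -Real.log ε ≤ c0 := le_max_right _ _
      linarith
    calc Real.exp (-K₀^2/8) ≤ Real.exp (Real.log ε) := Real.exp_le_exp.2 (h3.trans h4)
      _ = ε := Real.exp_log hεpos
  have htail : 2*M*(2:ℝ)^((n:ℝ)/2) * Real.exp (-K₀^2/8) ≤ δ := by
    have h1 : 2*M*(2:ℝ)^((n:ℝ)/2) * Real.exp (-K₀^2/8) ≤ (2*M*(2:ℝ)^((n:ℝ)/2) + 1) * ε := by
      have := Real.exp_pos (-K₀^2/8)
      nlinarith [mul_le_mul_of_nonneg_left hexp (by positivity : (0:ℝ) ≤ 2*M*(2:ℝ)^((n:ℝ)/2))]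
    have h2 : (2*M*(2:ℝ)^((n:ℝ)/2) + 1) * ε = δ := by
      rw [hεdef]; field_simp
    linarith
  haveI : Nonempty (Fin n) := ⟨⟨0, hn⟩⟩
  set ω : ℝ := (volume (ball (0:Rn n) 1)).toReal with hωdef
  have hωpos : 0 < ω := ENNReal.toReal_pos (measure_ball_pos _ _ one_pos).ne'
    measure_ball_lt_top.ne
  set A : ℝ := (4*Real.pi)^(-(n:ℝ)/2) * K₀^n + ω⁻¹ with hAdef
  set K : ℝ := max K₀ A with hKdef
  have hK₀K : K₀ ≤ K := le_max_left _ _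
  have hAK : A ≤ K := le_max_right _ _
  have hKpos : 0 < K := lt_of_lt_of_le hK₀pos hK₀K
  refine ⟨K, hKpos, ?_⟩
  intro R hR u₀ hu₀m hu₀N hbdd
  have main : ∀ x : Rn n, ∀ t : ℝ, 0 < t → ENNReal.ofReal (K ^ 2 * t) ≤ R ^ 2 →
      Metric.infDist (caloricExt u₀ x t) N ≤ K * bmoSeminorm u₀ R + δ := by
    intro x t ht hKt
    have hst : (0:ℝ) < Real.sqrt t := Real.sqrt_pos.2 ht
    set r : ℝ := K₀ * Real.sqrt t with hrdef
    have hrpos : 0 < r := mul_pos hK₀pos hst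
    have hrr : r * r = K₀^2 * t := by
      rw [hrdef]; have := Real.sq_sqrt ht.le; nlinarith
    have hrR : ENNReal.ofReal r ≤ R := by
      by_contra h
      push_neg at h
      have h2 : R^2 < (ENNReal.ofReal r)^2 := ENNReal.pow_lt_pow_left two_ne_zero h
      have h3 : (ENNReal.ofReal r)^2 ≤ ENNReal.ofReal (K^2*t) := by
        rw [sq, ← ENNReal.ofReal_mul hrpos.le]
        apply ENNReal.ofReal_le_ofReal
        rw [hrr]
        have hKK : K₀^2 ≤ K^2 := by nlinarith
        nlinarith [ht.le]
      exact absurd (lt_of_lt_of_le h2 (h3.trans hKt)) (lt_irrefl _)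
    set c : Rn l := ballAvg u₀ x r with hcdef
    have hvol : (volume (ball x r)).toReal = r^n * ω := by
      rw [Measure.addHaar_ball volume x hrpos.le, finrank_euclideanSpace_fin,
        ENNReal.toReal_mul, ENNReal.toReal_ofReal (by positivity)]
    have hvolpos : 0 < (volume (ball x r)).toReal := by
      rw [hvol]; positivity
    have hub : ∀ y, ‖u₀ y‖ ≤ M := fun y => hNM _ (hu₀N y)
    -- bound on the average
    have hu₀sm : AEStronglyMeasurable u₀ (volume.restrict (ball x r)) :=
      hu₀m.aestronglyMeasurable
    have hcM : ‖c‖ ≤ M := by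
      rw [hcdef, ballAvg, setAverage_eq]
      rw [norm_smul, norm_inv, Real.norm_eq_abs, abs_of_nonneg measureReal_nonneg]
      have h1 : ‖∫ y in ball x r, u₀ y‖ ≤ M * (volume (ball x r)).toReal :=
        norm_setIntegral_le_of_norm_le_const measure_ball_lt_top (fun y _ => hub y)
      calc (volume (ball x r)).toReal⁻¹ * ‖∫ y in ball x r, u₀ y‖
          ≤ (volume (ball x r)).toReal⁻¹ * (M * (volume (ball x r)).toReal) := by
            gcongr
        _ = M := by field_simp
    have hucm : ∀ y, ‖u₀ y - c‖ ≤ 2*M := fun y => by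
      calc ‖u₀ y - c‖ ≤ ‖u₀ y‖ + ‖c‖ := norm_sub_le _ _
        _ ≤ 2*M := by linarith [hub y]
    -- BMO element
    have hbmoel : (r^n)⁻¹ * (∫ y in ball x r, ‖u₀ y - ballAvg u₀ x r‖) ≤ bmoSeminorm u₀ R :=
      le_csSup hbdd ⟨x, r, hrpos, hrR, rfl⟩
    have hbmonn : 0 ≤ bmoSeminorm u₀ R := by
      refine le_trans ?_ hbmoel
      have : 0 ≤ ∫ y in ball x r, ‖u₀ y - ballAvg u₀ x r‖ :=
        integral_nonneg fun y => norm_nonneg _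
      positivity
    have hIball : (∫ y in ball x r, ‖u₀ y - c‖) ≤ r^n * bmoSeminorm u₀ R := by
      have h1 := mul_le_mul_of_nonneg_left hbmoel (by positivity : (0:ℝ) ≤ r^n)
      calc (∫ y in ball x r, ‖u₀ y - c‖)
          = r^n * ((r^n)⁻¹ * (∫ y in ball x r, ‖u₀ y - ballAvg u₀ x r‖)) := by
            rw [hcdef]; field_simp
        _ ≤ r^n * bmoSeminorm u₀ R := h1
    -- integrability on ball
    have hsm_ucm : AEStronglyMeasurable (fun y => ‖u₀ y - c‖)
        (volume.restrict (ball x r)) :=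
      (hu₀m.sub measurable_const).norm.aestronglyMeasurable
    have hint_ball : IntegrableOn (fun y => ‖u₀ y - c‖) (ball x r) := by
      refine Integrable.mono' (g := fun _ => 2*M)
        (integrableOn_const measure_ball_lt_top.ne) hsm_ucm ?_
      exact Filter.Eventually.of_forall fun y => by
        rw [Real.norm_eq_abs, abs_of_nonneg (norm_nonneg _)]; exact hucm y
    -- distance from average to N
    have hdc : Metric.infDist c N ≤ ω⁻¹ * bmoSeminorm u₀ R := by
      have h1 : ∀ y ∈ ball x r, Metric.infDist c N ≤ ‖u₀ y - c‖ := fun y _ => by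
        rw [norm_sub_rev, ← dist_eq_norm]
        exact infDist_le_dist_of_mem (hu₀N y)
      have h2 : Metric.infDist c N * (volume (ball x r)).toReal ≤
          ∫ y in ball x r, ‖u₀ y - c‖ := by
        have h3 := setIntegral_mono_on
          (integrableOn_const measure_ball_lt_top.ne :
            IntegrableOn (fun _ => Metric.infDist c N) (ball x r) volume)
          hint_ball measurableSet_ball h1
        rwa [setIntegral_const, smul_eq_mul, mul_comm] at h3
      rw [hvol] at h2
      have h4 : Metric.infDist c N * (r^n * ω) ≤ r^n * bmoSeminorm u₀ R :=
        h2.trans hIball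
      have h5 : 0 < r^n * ω := by positivity
      rw [← mul_le_mul_iff_of_pos_right h5]
      calc Metric.infDist c N * (r^n*ω) ≤ r^n * bmoSeminorm u₀ R := h4
        _ = ω⁻¹ * bmoSeminorm u₀ R * (r^n*ω) := by field_simp
    -- kernel integrability facts
    have hGint : Integrable (fun y : Rn n => heatKernel n (x - y) t) :=
      heatKernel_integrable_sub ht x
    have hGsm : AEStronglyMeasurable (fun y : Rn n => heatKernel n (x - y) t) volume :=
      hGint.aestronglyMeasurable
    have hGm : Measurable (fun y : Rn n => heatKernel n (x - y) t) := by
      apply Measurable.mul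
      · exact measurable_const
      · exact (Real.continuous_exp.comp (by continuity)).measurable
    have hu_int : Integrable (fun y => heatKernel n (x-y) t • u₀ y) := by
      refine Integrable.mono' (hGint.const_mul M) ?_ ?_
      · exact (hGm.smul hu₀m).aestronglyMeasurable
      · refine Filter.Eventually.of_forall fun y => ?_
        rw [norm_smul, Real.norm_eq_abs, abs_of_nonneg (heatKernel_nonneg _ ht)]
        calc heatKernel n (x-y) t * ‖u₀ y‖ ≤ heatKernel n (x-y) t * M := by
              have := heatKernel_nonneg (n := n) (x - y) ht
              exact mul_le_mul_of_nonneg_left (hub y) this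
          _ = M * heatKernel n (x-y) t := mul_comm _ _
    have hga_int : Integrable (fun y => heatKernel n (x-y) t * ‖u₀ y - c‖) := by
      refine Integrable.mono' (hGint.const_mul (2*M)) ?_ ?_
      · exact (hGm.mul (hu₀m.sub measurable_const).norm).aestronglyMeasurable
      · refine Filter.Eventually.of_forall fun y => ?_
        have hGnn := heatKernel_nonneg (n := n) (x - y) ht
        rw [Real.norm_eq_abs, abs_of_nonneg (by positivity)]
        calc heatKernel n (x-y) t * ‖u₀ y - c‖ ≤ heatKernel n (x-y) t * (2*M) :=
              mul_le_mul_of_nonneg_left (hucm y) hGnn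
          _ = 2*M * heatKernel n (x-y) t := mul_comm _ _
    -- ũ - c
    have hEq : caloricExt u₀ x t - c = ∫ y, heatKernel n (x-y) t • (u₀ y - c) := by
      have h1 : ∀ y, heatKernel n (x-y) t • (u₀ y - c)
          = heatKernel n (x-y) t • u₀ y - heatKernel n (x-y) t • c := fun y => smul_sub _ _ _
      rw [caloricExt]
      simp_rw [h1]
      rw [integral_sub hu_int (hGint.smul_const c), integral_smul_const,
        integral_heatKernel_sub ht x, one_smul]
    have hnorm : ‖caloricExt u₀ x t - c‖ ≤ ∫ y, heatKernel n (x-y) t * ‖u₀ y - c‖ := by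
      rw [hEq]
      refine (norm_integral_le_integral_norm _).trans_eq ?_
      congr 1
      funext y
      rw [norm_smul, Real.norm_eq_abs, abs_of_nonneg (heatKernel_nonneg _ ht)]
    have hsplit : (∫ y, heatKernel n (x-y) t * ‖u₀ y - c‖)
        = (∫ y in ball x r, heatKernel n (x-y) t * ‖u₀ y - c‖)
          + ∫ y in (ball x r)ᶜ, heatKernel n (x-y) t * ‖u₀ y - c‖ :=
      (integral_add_compl measurableSet_ball hga_int).symm
    -- key rpow computation
    have hCpos : (0:ℝ) < 4*Real.pi*t := by positivity
    have hrpow : (4*Real.pi*t)^(-(n:ℝ)/2) * r^n = (4*Real.pi)^(-(n:ℝ)/2) * K₀^n := by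
      have h1 : (4*Real.pi*t)^(-(n:ℝ)/2) = (4*Real.pi)^(-(n:ℝ)/2) * t^(-(n:ℝ)/2) :=
        Real.mul_rpow (by positivity) ht.le
      have h2 : r^n = K₀^n * Real.sqrt t ^ n := by rw [hrdef, mul_pow]
      have h3 : Real.sqrt t ^ n = t ^ ((n:ℝ)/2) := by
        rw [← Real.rpow_natCast (Real.sqrt t) n, Real.sqrt_eq_rpow, ← Real.rpow_mul ht.le]
        congr 1
        ring
      have h4 : t^(-(n:ℝ)/2) * t^((n:ℝ)/2) = 1 := by
        rw [← Real.rpow_add ht]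
        rw [show -(n:ℝ)/2 + (n:ℝ)/2 = 0 by ring, Real.rpow_zero]
      rw [h1, h2, h3]
      linear_combination ((4*Real.pi)^(-(n:ℝ)/2)*K₀^n) * h4
    -- inside estimate
    have hin : (∫ y in ball x r, heatKernel n (x-y) t * ‖u₀ y - c‖)
        ≤ (4*Real.pi)^(-(n:ℝ)/2) * K₀^n * bmoSeminorm u₀ R := by
      have h1 : (∫ y in ball x r, heatKernel n (x-y) t * ‖u₀ y - c‖)
          ≤ ∫ y in ball x r, (4*Real.pi*t)^(-(n:ℝ)/2) * ‖u₀ y - c‖ := by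
        refine setIntegral_mono_on hga_int.integrableOn (hint_ball.const_mul _)
          measurableSet_ball fun y _ => ?_
        exact mul_le_mul_of_nonneg_right (heatKernel_le _ ht) (norm_nonneg _)
      have h2 : (∫ y in ball x r, (4*Real.pi*t)^(-(n:ℝ)/2) * ‖u₀ y - c‖)
          = (4*Real.pi*t)^(-(n:ℝ)/2) * ∫ y in ball x r, ‖u₀ y - c‖ := integral_const_mul _ _
      have h3 : (4*Real.pi*t)^(-(n:ℝ)/2) * (∫ y in ball x r, ‖u₀ y - c‖)
          ≤ (4*Real.pi*t)^(-(n:ℝ)/2) * (r^n * bmoSeminorm u₀ R) := by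
        have : (0:ℝ) ≤ (4*Real.pi*t)^(-(n:ℝ)/2) := Real.rpow_nonneg hCpos.le _
        exact mul_le_mul_of_nonneg_left hIball this
      calc (∫ y in ball x r, heatKernel n (x-y) t * ‖u₀ y - c‖)
          ≤ (4*Real.pi*t)^(-(n:ℝ)/2) * (r^n * bmoSeminorm u₀ R) := by
            rw [← h2] at h3; exact h1.trans (h2 ▸ h3)
        _ = (4*Real.pi)^(-(n:ℝ)/2) * K₀^n * bmoSeminorm u₀ R := by
            rw [← hrpow]; ring
    -- outside estimate
    have hout : (∫ y in (ball x r)ᶜ, heatKernel n (x-y) t * ‖u₀ y - c‖) ≤ δ := by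
      set E : ℝ := Real.exp (-K₀^2/8) with hEdef
      set h : Rn n → ℝ := fun y =>
        2*M * (E * ((4*Real.pi*t)^(-(n:ℝ)/2) * Real.exp (-(8*t)⁻¹ * ‖x-y‖^2))) with hhdef
      have h8 : (0:ℝ) < (8*t)⁻¹ := by positivity
      have hh_int : Integrable h := by
        have h1 : Integrable (fun z : Rn n => Real.exp (-(8*t)⁻¹ * ‖z‖^2)) :=
          integrable_rexp_neg_mul_sq_norm n h8
        exact (((h1.comp_sub_left x).const_mul _).const_mul _).const_mul _
      have hpt : ∀ y ∈ (ball x r)ᶜ, heatKernel n (x-y) t * ‖u₀ y - c‖ ≤ h y := by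
        intro y hy
        have hd : r ≤ ‖x - y‖ := by
          have : ¬ dist y x < r := hy
          rw [dist_comm, dist_eq_norm] at this
          linarith [not_lt.1 this]
        have hz2 : K₀^2 * t ≤ ‖x-y‖^2 := by
          rw [← hrr]; nlinarith [norm_nonneg (x - y), hrpos]
        have hGle : heatKernel n (x-y) t
            ≤ (4*Real.pi*t)^(-(n:ℝ)/2) * (E * Real.exp (-(8*t)⁻¹ * ‖x-y‖^2)) := by
          rw [heatKernel]
          have harg : -‖x-y‖^2/(4*t) ≤ -K₀^2/8 + (-(8*t)⁻¹ * ‖x-y‖^2) := by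
            have h8t : (0:ℝ) < 8*t := by positivity
            have e1 : -‖x-y‖^2/(4*t) = -‖x-y‖^2/(8*t) + -‖x-y‖^2/(8*t) := by
              field_simp; ring
            have e2 : -‖x-y‖^2/(8*t) ≤ -K₀^2/8 := by
              have hnum : (0:ℝ) ≤ (‖x-y‖^2 - K₀^2*t)/(8*t) := div_nonneg (by linarith) h8t.le
              have heq : -K₀^2/8 - (-‖x-y‖^2/(8*t)) = (‖x-y‖^2 - K₀^2*t)/(8*t) := by
                field_simp; ring
              linarith
            have e3 : -‖x-y‖^2/(8*t) = -(8*t)⁻¹ * ‖x-y‖^2 := by ring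
            linarith
          have := Real.exp_le_exp.2 harg
          rw [Real.exp_add] at this
          have hCnn : (0:ℝ) ≤ (4*Real.pi*t)^(-(n:ℝ)/2) := Real.rpow_nonneg hCpos.le _
          calc (4*Real.pi*t)^(-(n:ℝ)/2) * Real.exp (-‖x-y‖^2/(4*t))
              ≤ (4*Real.pi*t)^(-(n:ℝ)/2) * (Real.exp (-K₀^2/8)
                  * Real.exp (-(8*t)⁻¹ * ‖x-y‖^2)) :=
                mul_le_mul_of_nonneg_left this hCnn
            _ = (4*Real.pi*t)^(-(n:ℝ)/2) * (E * Real.exp (-(8*t)⁻¹ * ‖x-y‖^2)) := by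
                rw [hEdef]
        have hGnn := heatKernel_nonneg (n := n) (x - y) ht
        have hEnn : (0:ℝ) ≤ E := Real.exp_nonneg _
        have hexnn : (0:ℝ) ≤ Real.exp (-(8*t)⁻¹ * ‖x-y‖^2) := Real.exp_nonneg _
        have hCnn : (0:ℝ) ≤ (4*Real.pi*t)^(-(n:ℝ)/2) := Real.rpow_nonneg hCpos.le _
        calc heatKernel n (x-y) t * ‖u₀ y - c‖
            ≤ heatKernel n (x-y) t * (2*M) := mul_le_mul_of_nonneg_left (hucm y) hGnn
          _ ≤ ((4*Real.pi*t)^(-(n:ℝ)/2) * (E * Real.exp (-(8*t)⁻¹ * ‖x-y‖^2))) * (2*M) :=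
              mul_le_mul_of_nonneg_right hGle (by positivity)
          _ = h y := by rw [hhdef]; ring
      have hstep1 : (∫ y in (ball x r)ᶜ, heatKernel n (x-y) t * ‖u₀ y - c‖)
          ≤ ∫ y in (ball x r)ᶜ, h y :=
        setIntegral_mono_on hga_int.integrableOn hh_int.integrableOn
          measurableSet_ball.compl hpt
      have hstep2 : (∫ y in (ball x r)ᶜ, h y) ≤ ∫ y, h y := by
        refine setIntegral_le_integral hh_int (Filter.Eventually.of_forall fun y => ?_)
        rw [hhdef]; positivity
      have hIexp : (∫ y : Rn n, Real.exp (-(8*t)⁻¹ * ‖x-y‖^2)) = (8*Real.pi*t)^((n:ℝ)/2) := by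
        have h1 : (∫ y : Rn n, Real.exp (-(8*t)⁻¹ * ‖x-y‖^2))
            = ∫ z : Rn n, Real.exp (-(8*t)⁻¹ * ‖z‖^2) := by
          exact integral_sub_left_eq_self (fun z : Rn n => Real.exp (-(8*t)⁻¹ * ‖z‖^2)) volume x
        rw [h1, integral_rexp_neg_mul_sq_norm' n h8]
        congr 1
        field_simp
      have hstep3 : (∫ y, h y) = 2*M*(2:ℝ)^((n:ℝ)/2) * E := by
        rw [hhdef]
        simp only []
        rw [integral_const_mul, integral_const_mul, integral_const_mul, hIexp]
        have h28 : (8*Real.pi*t) = 2 * (4*Real.pi*t) := by ring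
        have h2 : (8*Real.pi*t)^((n:ℝ)/2) = (2:ℝ)^((n:ℝ)/2) * (4*Real.pi*t)^((n:ℝ)/2) := by
          rw [h28, Real.mul_rpow (by norm_num) hCpos.le]
        have h3 : (4*Real.pi*t)^(-(n:ℝ)/2) * (4*Real.pi*t)^((n:ℝ)/2) = 1 := by
          rw [← Real.rpow_add hCpos, show -(n:ℝ)/2 + (n:ℝ)/2 = 0 by ring, Real.rpow_zero]
        rw [h2]
        linear_combination (2*M*E*(2:ℝ)^((n:ℝ)/2)) * h3
      calc (∫ y in (ball x r)ᶜ, heatKernel n (x-y) t * ‖u₀ y - c‖)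
          ≤ ∫ y, h y := hstep1.trans hstep2
        _ = 2*M*(2:ℝ)^((n:ℝ)/2) * E := hstep3
        _ ≤ δ := htail
    -- combine
    have hcoeff : (4*Real.pi)^(-(n:ℝ)/2) * K₀^n + ω⁻¹ ≤ K := hAK
    calc Metric.infDist (caloricExt u₀ x t) N
        ≤ Metric.infDist c N + dist (caloricExt u₀ x t) c := infDist_le_infDist_add_dist
      _ ≤ ω⁻¹ * bmoSeminorm u₀ R
          + ((4*Real.pi)^(-(n:ℝ)/2) * K₀^n * bmoSeminorm u₀ R + δ) := by
          rw [dist_eq_norm]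
          have := hnorm
          rw [hsplit] at this
          linarith [hin, hout, hdc]
      _ = ((4*Real.pi)^(-(n:ℝ)/2) * K₀^n + ω⁻¹) * bmoSeminorm u₀ R + δ := by ring
      _ ≤ K * bmoSeminorm u₀ R + δ := by
          have hmm := mul_le_mul_of_nonneg_right hcoeff hbmonn
          linarith [hmm]
  refine ⟨main, fun hR' x t ht => ?_⟩
  rw [← hR']
  exact main x t ht (by rw [hR', ENNReal.top_pow two_ne_zero]; exact le_top)
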